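/- Let f : ℝ^d → ℝ be convex lower semicontinuous and L-smooth with respect to a norm ‖·‖, let 𝒦 ⊆ ℝ^d be compact convex, let x* minimize f over 𝒦, and let R : ℝ^d → ℝ be 1-strongly convex with respect to ‖·‖ with z = argmin_{x ∈ 𝒦} R(x). Set α_t = t, A_t = t(t+1)/2, η = 1/(4L). Run the Fenchel-game dynamics: y_t = ∇f(x̃_t) with x̃_t = (1/A_t)(α_t x_{t−1} + Σ_{s=1}^{t−1} α_s x_s), and x_t = argmin_{x ∈ 𝒦} [Σ_{s=1}^t ⟨x, α_s y_s⟩ + (1/η) R(x)] (Be-The-Regularized-Leader), with x_0 = z. Then x̄_T = (1/A_T) Σ_{t=1}^T α_t x_t satisfies f(x̄_T) − min_{x ∈ 𝒦} f(x) ≤ 8 L (R(x*) − R(z)) / (T(T+1)). -/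

import Mathlib

open scoped RealInnerProductSpace
open Finset

/-- The dual norm of a norm `N` on ℝ^d: `‖y‖_* = sup {⟪x, y⟫ : N x ≤ 1}`. -/
noncomputable def dualNorm {d : ℕ} (N : EuclideanSpace ℝ (Fin d) → ℝ)
    (y : EuclideanSpace ℝ (Fin d)) : ℝ :=
  sSup ((fun x => ⟪x, y⟫) '' {x | N x ≤ 1})

section Aux
variable {d : ℕ}

section NormLemmas
variable (N : EuclideanSpace ℝ (Fin d) → ℝ)
  (hN_add : ∀ u v, N (u + v) ≤ N u + N v)
  (hN_smul : ∀ (a : ℝ) (u : EuclideanSpace ℝ (Fin d)), N (a • u) = |a| * N u)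

include hN_smul in
lemma N_zero : N 0 = 0 := by
  have := hN_smul 0 0; simpa using this

include hN_add hN_smul in
lemma N_nonneg : ∀ u, 0 ≤ N u := by
  intro u
  have h1 : N (u + (-1 : ℝ) • u) ≤ N u + N ((-1:ℝ) • u) := hN_add u _
  rw [hN_smul] at h1
  have h2 : u + (-1:ℝ) • u = 0 := by simp
  rw [h2, N_zero N hN_smul] at h1
  simp at h1; linarith

include hN_add hN_smul in
lemma N_sum {ι : Type*} (s : Finset ι) (g : ι → EuclideanSpace ℝ (Fin d)) :
    N (∑ i ∈ s, g i) ≤ ∑ i ∈ s, N (g i) := by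
  classical
  induction s using Finset.induction with
  | empty => simp [N_zero N hN_smul]
  | @insert a s ha ih =>
    rw [Finset.sum_insert ha, Finset.sum_insert ha]
    exact le_trans (hN_add _ _) (by linarith [ih])

include hN_add hN_smul in
lemma N_upper : ∃ C : ℝ, 0 < C ∧ ∀ u, N u ≤ C * ‖u‖ := by
  classical
  set b := EuclideanSpace.basisFun (Fin d) ℝ
  set C : ℝ := (∑ i : Fin d, N (b i)) + 1 with hC
  have hCpos : 0 < C := by
    have : 0 ≤ ∑ i : Fin d, N (b i) :=
      Finset.sum_nonneg fun i _ => N_nonneg N hN_add hN_smul _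
    linarith
  refine ⟨C, hCpos, fun u => ?_⟩
  have hrepr : u = ∑ i : Fin d, u i • (b i : EuclideanSpace ℝ (Fin d)) := by
    have := b.sum_repr u
    simp only [EuclideanSpace.basisFun_repr] at this
    exact this.symm
  have h1 : N u ≤ ∑ i : Fin d, N (u i • (b i : EuclideanSpace ℝ (Fin d))) := by
    nth_rewrite 1 [hrepr]
    exact N_sum N hN_add hN_smul _ _
  have h2 : ∀ i : Fin d, N (u i • (b i : EuclideanSpace ℝ (Fin d))) ≤ N (b i) * ‖u‖ := by
    intro i
    rw [hN_smul]
    have hcoord : |u i| ≤ ‖u‖ := by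
      have := EuclideanSpace.norm_eq u
      have h3 : |u i| = Real.sqrt (|u i| ^ 2) := by
        rw [Real.sqrt_sq_eq_abs]; simp
      rw [this, h3]
      apply Real.sqrt_le_sqrt
      calc |u i| ^ 2 ≤ ∑ j : Fin d, ‖u j‖ ^ 2 := by
            have := Finset.single_le_sum (f := fun j => ‖u j‖^2)
              (fun j _ => by positivity) (Finset.mem_univ i)
            simpa [sq_abs] using this
      _ = _ := by norm_num
    calc |u i| * N (b i) ≤ ‖u‖ * N (b i) :=
          mul_le_mul_of_nonneg_right hcoord (N_nonneg N hN_add hN_smul _)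
      _ = N (b i) * ‖u‖ := mul_comm _ _
  calc N u ≤ ∑ i : Fin d, N (b i) * ‖u‖ := le_trans h1 (Finset.sum_le_sum fun i _ => h2 i)
    _ = (∑ i : Fin d, N (b i)) * ‖u‖ := by rw [Finset.sum_mul]
    _ ≤ C * ‖u‖ := by
        apply mul_le_mul_of_nonneg_right _ (norm_nonneg _)
        simp [hC]

include hN_add hN_smul in
lemma N_lipschitz (C : ℝ) (hC : ∀ u, N u ≤ C * ‖u‖) :
    ∀ u v, |N u - N v| ≤ C * ‖u - v‖ := by
  intro u v
  have h1 : N u ≤ N (u - v) + N v := by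
    have := hN_add (u - v) v; simpa using this
  have h2 : N v ≤ N (u - v) + N u := by
    have hv : v - u = (-1 : ℝ) • (u - v) := by simp [smul_sub]; abel
    have := hN_add (v - u) u
    rw [hv, hN_smul] at this
    simpa using this
  have := hC (u - v)
  rw [abs_le]; constructor <;> linarith

include hN_add hN_smul in
lemma N_cont : Continuous N := by
  obtain ⟨C, hCpos, hC⟩ := N_upper N hN_add hN_smul
  have : LipschitzWith (Real.toNNReal C) N := by
    apply LipschitzWith.of_dist_le_mul
    intro u v
    rw [Real.dist_eq, dist_eq_norm]
    calc |N u - N v| ≤ C * ‖u - v‖ := N_lipschitz N hN_add hN_smul C hC u v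
      _ ≤ _ := by
        apply mul_le_mul_of_nonneg_right _ (norm_nonneg _)
        exact le_of_eq (Real.coe_toNNReal C hCpos.le).symm
  exact this.continuous

variable (hN_zero : ∀ u, N u = 0 → u = 0)
  (hN_nonneg : ∀ u, 0 ≤ N u)
  (hN_cont : Continuous N)

include hN_smul hN_zero hN_nonneg hN_cont in
lemma N_lower : ∃ m : ℝ, 0 < m ∧ ∀ u, m * ‖u‖ ≤ N u := by
  rcases Nat.eq_zero_or_pos d with hd | hd
  · refine ⟨1, one_pos, fun u => ?_⟩
    have : u = 0 := by
      subst hd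
      exact Subsingleton.elim u 0
    simp [this, hN_nonneg]
  · haveI : Nonempty (Fin d) := ⟨⟨0, hd⟩⟩
    haveI : Nontrivial (EuclideanSpace ℝ (Fin d)) := by
      have : (EuclideanSpace.single (⟨0, hd⟩ : Fin d) (1:ℝ)) ≠ 0 := by
        intro hcon
        have := congrArg (fun v : EuclideanSpace ℝ (Fin d) => v ⟨0, hd⟩) hcon
        simp [EuclideanSpace.single_apply] at this
      exact ⟨_, _, this⟩
    have hsph : (Metric.sphere (0 : EuclideanSpace ℝ (Fin d)) 1).Nonempty :=
      NormedSpace.sphere_nonempty.mpr zero_le_one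
    obtain ⟨v, hv, hvmin⟩ := (isCompact_sphere (0 : EuclideanSpace ℝ (Fin d)) 1).exists_isMinOn
      hsph hN_cont.continuousOn
    have hvnorm : ‖v‖ = 1 := by simpa using hv
    have hm : 0 < N v := by
      rcases lt_or_eq_of_le (hN_nonneg v) with h | h
      · exact h
      · exfalso
        have := hN_zero v h.symm
        rw [this] at hvnorm; simp at hvnorm
    refine ⟨N v, hm, fun u => ?_⟩
    rcases eq_or_ne u 0 with rfl | hu
    · simp [hN_nonneg]
    · have hnu : (0:ℝ) < ‖u‖ := norm_pos_iff.mpr hu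
      have hmem : (‖u‖⁻¹ • u) ∈ Metric.sphere (0 : EuclideanSpace ℝ (Fin d)) 1 := by
        simp [norm_smul, abs_inv, abs_of_pos hnu, inv_mul_cancel₀ hnu.ne']
      have := hvmin hmem
      have h2 : N (‖u‖⁻¹ • u) = ‖u‖⁻¹ * N u := by
        rw [hN_smul]; congr 1; rw [abs_inv, abs_of_pos hnu]
      simp only [IsMinOn, IsMinFilter] at this
      have h3 : N v ≤ ‖u‖⁻¹ * N u := by rw [← h2]; exact this
      calc N v * ‖u‖ ≤ (‖u‖⁻¹ * N u) * ‖u‖ := by nlinarith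
        _ = N u := by field_simp

include hN_smul hN_zero hN_nonneg in
lemma pairing_le (m : ℝ) (hm : 0 < m) (hml : ∀ u, m * ‖u‖ ≤ N u)
    (g w : EuclideanSpace ℝ (Fin d)) : ⟪w, g⟫ ≤ N w * dualNorm N g := by
  have hbdd : BddAbove ((fun x => ⟪x, g⟫) '' {x | N x ≤ 1}) := by
    refine ⟨‖g‖ / m, ?_⟩
    rintro r ⟨x, hx, rfl⟩
    have h1 : ⟪x, g⟫ ≤ ‖x‖ * ‖g‖ := real_inner_le_norm x g
    have h2 : ‖x‖ ≤ 1 / m := by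
      have := hml x
      have : m * ‖x‖ ≤ 1 := le_trans this hx
      rw [le_div_iff₀ hm] ; linarith
    calc ⟪x, g⟫ ≤ ‖x‖ * ‖g‖ := h1
      _ ≤ (1/m) * ‖g‖ := mul_le_mul_of_nonneg_right h2 (norm_nonneg g)
      _ = ‖g‖ / m := by ring
  rcases eq_or_lt_of_le (hN_nonneg w) with h | h
  · have hw0 : w = 0 := hN_zero w h.symm
    subst hw0
    have h0 : N (0 : EuclideanSpace ℝ (Fin d)) = 0 := h.symm
    simp [h0]
  · have hmem : ((N w)⁻¹ • w) ∈ {x | N x ≤ 1} := by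
      simp only [Set.mem_setOf_eq]
      rw [hN_smul, abs_inv, abs_of_pos h, inv_mul_cancel₀ h.ne']
    have hle : ⟪(N w)⁻¹ • w, g⟫ ≤ dualNorm N g :=
      le_csSup hbdd ⟨_, hmem, rfl⟩
    have : (N w)⁻¹ * ⟪w, g⟫ ≤ dualNorm N g := by
      rwa [real_inner_smul_left] at hle
    calc ⟪w, g⟫ = N w * ((N w)⁻¹ * ⟪w, g⟫) := by field_simp
      _ ≤ N w * dualNorm N g := mul_le_mul_of_nonneg_left this h.le

end NormLemmas

lemma line_hasDerivAt (f : EuclideanSpace ℝ (Fin d) → ℝ) (hdiff : Differentiable ℝ f)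
    (u w : EuclideanSpace ℝ (Fin d)) (t : ℝ) :
    HasDerivAt (fun s : ℝ => f (u + s • w)) ⟪gradient f (u + t • w), w⟫ t := by
  have hline : HasDerivAt (fun s : ℝ => u + s • w) w t := by
    simpa using ((hasDerivAt_id t).smul_const w).const_add u
  have hf : HasFDerivAt f (InnerProductSpace.toDual ℝ _ (gradient f (u + t • w))) (u + t • w) :=
    hasGradientAt_iff_hasFDerivAt.mp (hdiff (u + t • w)).hasGradientAt
  have := hf.comp_hasDerivAt t hline
  rw [InnerProductSpace.toDual_apply_apply] at this
  exact this

lemma convex_grad_ineq (f : EuclideanSpace ℝ (Fin d) → ℝ)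
    (hconv : ConvexOn ℝ Set.univ f) (hdiff : Differentiable ℝ f)
    (u w : EuclideanSpace ℝ (Fin d)) :
    f u + ⟪gradient f u, w - u⟫ ≤ f w := by
  set g : ℝ → ℝ := fun s => f (u + s • (w - u)) with hg
  have hd : HasDerivAt g ⟪gradient f u, w - u⟫ 0 := by
    have := line_hasDerivAt f hdiff u (w - u) 0
    simpa using this
  have hslope : Filter.Tendsto (slope g 0) (nhdsWithin 0 (Set.Ioi 0))
      (nhds ⟪gradient f u, w - u⟫) := by
    have := hasDerivAt_iff_tendsto_slope.mp hd
    exact this.mono_left (nhdsWithin_mono 0 (fun a ha => by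
      simp only [Set.mem_compl_iff, Set.mem_singleton_iff]
      exact ne_of_gt ha))
  have hev : ∀ᶠ a in nhdsWithin 0 (Set.Ioi 0), slope g 0 a ≤ f w - f u := by
    filter_upwards [Ioc_mem_nhdsGT_of_mem (Set.mem_Ico.mpr ⟨le_refl 0, one_pos⟩)] with a ha
    obtain ⟨ha0, ha1⟩ := ha
    have hcvx := hconv.2 (Set.mem_univ w) (Set.mem_univ u)
      (le_of_lt ha0) (by linarith : (0:ℝ) ≤ 1 - a) (by ring)
    have hpt : a • w + (1 - a) • u = u + a • (w - u) := by
      rw [smul_sub, sub_smul]; module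
    rw [hpt] at hcvx
    have hga : g a ≤ a * f w + (1 - a) * f u := hcvx
    have : slope g 0 a = (g a - g 0) / a := by
      rw [slope_def_field]; field_simp; ring
    rw [this]
    rw [div_le_iff₀ ha0]
    have hg0 : g 0 = f u := by simp [hg]
    rw [hg0]
    nlinarith
  have := le_of_tendsto hslope hev
  linarith

lemma strong_min (ψ : EuclideanSpace ℝ (Fin d) → ℝ) (N : EuclideanSpace ℝ (Fin d) → ℝ)
    (μ : ℝ) (K : Set (EuclideanSpace ℝ (Fin d))) (hKconv : Convex ℝ K)
    (hstrong : ∀ u v : EuclideanSpace ℝ (Fin d), ∀ a : ℝ, 0 ≤ a → a ≤ 1 →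
      ψ (a • u + (1 - a) • v) ≤ a * ψ u + (1 - a) * ψ v - μ / 2 * a * (1 - a) * (N (u - v)) ^ 2)
    (x₀ : EuclideanSpace ℝ (Fin d)) (hx₀ : x₀ ∈ K) (hmin : ∀ w ∈ K, ψ x₀ ≤ ψ w)
    (w : EuclideanSpace ℝ (Fin d)) (hw : w ∈ K) :
    ψ x₀ + μ / 2 * (N (w - x₀)) ^ 2 ≤ ψ w := by
  have key : ∀ a : ℝ, 0 < a → a ≤ 1 →
      μ / 2 * (1 - a) * (N (w - x₀)) ^ 2 ≤ ψ w - ψ x₀ := by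
    intro a ha0 ha1
    have hmem : a • w + (1 - a) • x₀ ∈ K :=
      hKconv hw hx₀ ha0.le (by linarith) (by ring)
    have h1 := hmin _ hmem
    have h2 := hstrong w x₀ a ha0.le ha1
    have h3 : ψ x₀ ≤ a * ψ w + (1 - a) * ψ x₀ - μ / 2 * a * (1 - a) * (N (w - x₀)) ^ 2 :=
      le_trans h1 h2
    have h4 : μ / 2 * a * (1 - a) * (N (w - x₀)) ^ 2 ≤ a * (ψ w - ψ x₀) := by nlinarith
    nlinarith
  have htend : Filter.Tendsto (fun a : ℝ => μ / 2 * (1 - a) * (N (w - x₀)) ^ 2)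
      (nhdsWithin 0 (Set.Ioi 0)) (nhds (μ / 2 * (N (w - x₀)) ^ 2)) := by
    have : Filter.Tendsto (fun a : ℝ => μ / 2 * (1 - a) * (N (w - x₀)) ^ 2)
        (nhds 0) (nhds (μ / 2 * (1 - 0) * (N (w - x₀)) ^ 2)) := by
      apply Continuous.tendsto
      continuity
    simpa using this.mono_left nhdsWithin_le_nhds
  have hev : ∀ᶠ a in nhdsWithin (0:ℝ) (Set.Ioi 0),
      μ / 2 * (1 - a) * (N (w - x₀)) ^ 2 ≤ ψ w - ψ x₀ := by
    filter_upwards [Ioc_mem_nhdsGT_of_mem (Set.mem_Ico.mpr ⟨le_refl (0:ℝ), one_pos⟩)] with a ha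
    exact key a ha.1 ha.2
  have := le_of_tendsto htend hev
  linarith

lemma grad_lipschitz (f : EuclideanSpace ℝ (Fin d) → ℝ)
    (N : EuclideanSpace ℝ (Fin d) → ℝ) (L C : ℝ) (hC : 0 < C)
    (hub : ∀ u, N u ≤ C * ‖u‖)
    (hpair : ∀ u v w, ⟪gradient f u - gradient f v, w⟫ ≤ L * N (u - v) * N w)
    (hnn : ∀ u, 0 ≤ N u)
    (hL : 0 < L) :
    Continuous (gradient f) := by
  have key : ∀ u v, ‖gradient f u - gradient f v‖ ≤ (L * C * C) * ‖u - v‖ := by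
    intro u v
    set g := gradient f u - gradient f v with hgdef
    rcases eq_or_ne g 0 with h0 | h0
    · rw [h0]; simp; positivity
    · have h1 : ⟪g, g⟫ ≤ L * N (u - v) * N g := hpair u v g
      have h2 : ⟪g, g⟫ = ‖g‖ ^ 2 := real_inner_self_eq_norm_sq g
      have h3 : N (u - v) ≤ C * ‖u - v‖ := hub _
      have h4 : N g ≤ C * ‖g‖ := hub _
      have hgn : 0 < ‖g‖ := norm_pos_iff.mpr h0
      have h5 : L * N (u - v) * N g ≤ L * (C * ‖u - v‖) * (C * ‖g‖) := by
        have := hnn (u - v); have := hnn g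
        have h6 : L * N (u - v) ≤ L * (C * ‖u - v‖) :=
          mul_le_mul_of_nonneg_left h3 hL.le
        apply mul_le_mul h6 h4 (hnn g) (by positivity)
      nlinarith
  have : LipschitzWith (Real.toNNReal (L * C * C)) (gradient f) := by
    apply LipschitzWith.of_dist_le_mul
    intro u v
    rw [dist_eq_norm, dist_eq_norm]
    calc ‖gradient f u - gradient f v‖ ≤ (L * C * C) * ‖u - v‖ := key u v
      _ ≤ _ := by
        apply mul_le_mul_of_nonneg_right _ (norm_nonneg _)
        exact le_of_eq (Real.coe_toNNReal _ (by positivity)).symm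
  exact this.continuous

lemma descent_lemma (f : EuclideanSpace ℝ (Fin d) → ℝ)
    (N : EuclideanSpace ℝ (Fin d) → ℝ) (L : ℝ)
    (hdiff : Differentiable ℝ f) (hgc : Continuous (gradient f))
    (hpair : ∀ u v w, ⟪gradient f u - gradient f v, w⟫ ≤ L * N (u - v) * N w)
    (hsm : ∀ (a : ℝ) (u : EuclideanSpace ℝ (Fin d)), N (a • u) = |a| * N u)
    (u w : EuclideanSpace ℝ (Fin d)) :
    f (u + w) ≤ f u + ⟪gradient f u, w⟫ + L / 2 * (N w) ^ 2 := by
  set φ : ℝ → ℝ := fun t => ⟪gradient f (u + t • w), w⟫ with hφ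
  have hφcont : Continuous φ := by
    apply Continuous.inner
    · exact hgc.comp (by continuity)
    · exact continuous_const
  have hint : IntervalIntegrable φ MeasureTheory.volume 0 1 :=
    hφcont.intervalIntegrable 0 1
  have heq : ∫ t in (0:ℝ)..1, φ t = f (u + w) - f u := by
    have := intervalIntegral.integral_eq_sub_of_hasDerivAt
      (f := fun s : ℝ => f (u + s • w)) (f' := φ)
      (fun t _ => line_hasDerivAt f hdiff u w t) hint
    simpa using this
  have hptwise : ∀ t ∈ Set.Icc (0:ℝ) 1, φ t - φ 0 ≤ (L * (N w) ^ 2) * t := by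
    intro t ht
    have h1 : φ t - φ 0 = ⟪gradient f (u + t • w) - gradient f (u + (0:ℝ) • w), w⟫ := by
      rw [inner_sub_left]
    have h2 := hpair (u + t • w) (u + (0:ℝ) • w) w
    have h3 : (u + t • w) - (u + (0:ℝ) • w) = t • w := by module
    rw [h3, hsm, abs_of_nonneg ht.1] at h2
    rw [h1]
    calc ⟪gradient f (u + t • w) - gradient f (u + (0:ℝ) • w), w⟫
        ≤ L * (t * N w) * N w := h2
      _ = (L * (N w) ^ 2) * t := by ring
  have hsub : IntervalIntegrable (fun t => φ t - φ 0) MeasureTheory.volume 0 1 :=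
    hint.sub (intervalIntegrable_const)
  have hrhs : IntervalIntegrable (fun t => (L * (N w) ^ 2) * t) MeasureTheory.volume 0 1 :=
    (continuous_const.mul continuous_id).intervalIntegrable 0 1
  have hmono : ∫ t in (0:ℝ)..1, (φ t - φ 0) ≤ ∫ t in (0:ℝ)..1, (L * (N w) ^ 2) * t :=
    intervalIntegral.integral_mono_on zero_le_one hsub hrhs hptwise
  have hL1 : ∫ t in (0:ℝ)..1, (φ t - φ 0) = (f (u + w) - f u) - φ 0 := by
    rw [intervalIntegral.integral_sub hint intervalIntegrable_const, heq]
    simp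
  have hR1 : ∫ t in (0:ℝ)..1, (L * (N w) ^ 2) * t = L / 2 * (N w) ^ 2 := by
    rw [intervalIntegral.integral_const_mul, integral_id]
    ring
  have hφ0 : φ 0 = ⟪gradient f u, w⟫ := by simp [hφ]
  rw [hL1, hR1, hφ0] at hmono
  linarith

end Aux
set_option maxHeartbeats 1000000 in
/-- Theorem / Nesterov's ∞-memory method: the Fenchel-game dynamics with
Optimistic-FTL for the `y`-player and Be-The-Regularized-Leader (regularizer `R/η`,
`η = 1/(4L)`) for the `x`-player, using weights `α_t = t`, satisfy
`f(x̄_T) - min_{x ∈ 𝒦} f(x) ≤ 8L(R(x*) - R(z))/(T(T+1))`. -/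
theorem nesterov_infty_memory_rate {d : ℕ}
    (f : EuclideanSpace ℝ (Fin d) → ℝ)
    (K : Set (EuclideanSpace ℝ (Fin d)))
    (hconv : ConvexOn ℝ Set.univ f)
    (hlsc : LowerSemicontinuous f)
    (hKcomp : IsCompact K) (hKconv : Convex ℝ K)
    (N : EuclideanSpace ℝ (Fin d) → ℝ)
    -- N is a norm
    (hN_add : ∀ u v, N (u + v) ≤ N u + N v)
    (hN_smul : ∀ (a : ℝ) (u : EuclideanSpace ℝ (Fin d)), N (a • u) = |a| * N u)
    (hN_zero : ∀ u, N u = 0 → u = 0)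
    -- f is L-smooth with respect to N
    (L : ℝ) (hL : 0 < L)
    (hdiff : Differentiable ℝ f)
    (hsmooth : ∀ u v, dualNorm N (gradient f u - gradient f v) ≤ L * N (u - v))
    -- x* minimizes f over K
    (xstar : EuclideanSpace ℝ (Fin d)) (hxstar : xstar ∈ K)
    (hmin : ∀ w ∈ K, f xstar ≤ f w)
    -- R is 1-strongly convex w.r.t. N, minimized over K at z
    (R : EuclideanSpace ℝ (Fin d) → ℝ)
    (hR : ∀ u v : EuclideanSpace ℝ (Fin d), ∀ a : ℝ, 0 ≤ a → a ≤ 1 →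
      R (a • u + (1 - a) • v)
        ≤ a * R u + (1 - a) * R v - 1 / 2 * a * (1 - a) * (N (u - v)) ^ 2)
    (z : EuclideanSpace ℝ (Fin d)) (hzK : z ∈ K) (hz : ∀ w ∈ K, R z ≤ R w)
    (η : ℝ) (hη : η = 1 / (4 * L))
    (T : ℕ) (hT : 1 ≤ T)
    (A : ℕ → ℝ) (hA : ∀ t, A t = (t : ℝ) * (t + 1) / 2)
    -- the game dynamics
    (x : ℕ → EuclideanSpace ℝ (Fin d)) (hx0 : x 0 = z)
    (xtil : ℕ → EuclideanSpace ℝ (Fin d))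
    (hxtil : ∀ t, 1 ≤ t →
      xtil t = (A t)⁻¹ • ((t : ℝ) • x (t - 1) + ∑ s ∈ Icc 1 (t - 1), (s : ℝ) • x s))
    (y : ℕ → EuclideanSpace ℝ (Fin d))
    (hy : ∀ t, 1 ≤ t → y t = gradient f (xtil t))
    (hx : ∀ t, 1 ≤ t → t ≤ T → x t ∈ K ∧ ∀ w ∈ K,
      (∑ s ∈ Icc 1 t, (s : ℝ) * ⟪x t, y s⟫) + (1 / η) * R (x t)
        ≤ (∑ s ∈ Icc 1 t, (s : ℝ) * ⟪w, y s⟫) + (1 / η) * R w)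
    (xbar : EuclideanSpace ℝ (Fin d))
    (hxbar : xbar = (A T)⁻¹ • ∑ t ∈ Icc 1 T, (t : ℝ) • x t) :
    f xbar - f xstar ≤ 8 * L * (R xstar - R z) / ((T : ℝ) * (T + 1)) := by
  classical
  have hNnn := N_nonneg N hN_add hN_smul
  obtain ⟨C, hCpos, hub⟩ := N_upper N hN_add hN_smul
  have hNcont := N_cont N hN_add hN_smul
  obtain ⟨m, hmpos, hml⟩ := N_lower N hN_smul hN_zero hNnn hNcont
  have hpair : ∀ u v w, ⟪gradient f u - gradient f v, w⟫ ≤ L * N (u - v) * N w := by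
    intro u v w
    calc ⟪gradient f u - gradient f v, w⟫
        = ⟪w, gradient f u - gradient f v⟫ := real_inner_comm _ _
      _ ≤ N w * dualNorm N (gradient f u - gradient f v) :=
          pairing_le N hN_smul hN_zero hNnn m hmpos hml _ _
      _ ≤ N w * (L * N (u - v)) := mul_le_mul_of_nonneg_left (hsmooth u v) (hNnn w)
      _ = L * N (u - v) * N w := by ring
  have hgc := grad_lipschitz f N L C hCpos hub hpair hNnn hL
  have hηpos : 0 < η := by rw [hη]; positivity
  have hη4 : 1 / η = 4 * L := by rw [hη]; field_simp
  have hηnn : 0 ≤ 1 / η := by positivity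
  set g : ℕ → EuclideanSpace ℝ (Fin d) := fun t => gradient f (xtil t) with hgdef
  set ψ : ℕ → EuclideanSpace ℝ (Fin d) → ℝ := fun t w =>
    (∑ s ∈ Icc 1 t, (s : ℝ) * (f (xtil s) + ⟪g s, w - xtil s⟫)) + (1 / η) * R w with hψdef
  set Abar : ℕ → EuclideanSpace ℝ (Fin d) := fun t => ∑ s ∈ Icc 1 t, (s : ℝ) • x s with hAbardef
  set xb : ℕ → EuclideanSpace ℝ (Fin d) := fun t => (A t)⁻¹ • Abar t with hxbdef
  clear_value g ψ Abar xb
  have hgs : ∀ s, g s = gradient f (xtil s) := fun s => by rw [hgdef]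
  have hApos : ∀ t : ℕ, 1 ≤ t → 0 < A t := by
    intro t ht
    rw [hA]
    have h1 : (1:ℝ) ≤ (t:ℝ) := by exact_mod_cast ht
    nlinarith
  have hAnn : ∀ t : ℕ, 0 ≤ A t := by
    intro t; rw [hA]; positivity
  -- all iterates lie in K
  have hxK : ∀ t, t ≤ T → x t ∈ K := by
    intro t ht
    rcases Nat.eq_zero_or_pos t with rfl | h
    · rw [hx0]; exact hzK
    · exact (hx t h ht).1
  -- x t minimizes ψ t over K
  have hψmin : ∀ t, t ≤ T → ∀ w ∈ K, ψ t (x t) ≤ ψ t w := by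
    intro t ht w hw
    rcases Nat.eq_zero_or_pos t with rfl | h
    · have hempty : (Icc 1 0 : Finset ℕ) = ∅ := by simp
      simp only [hψdef, hx0, hempty, Finset.sum_empty, zero_add]
      exact mul_le_mul_of_nonneg_left (hz w hw) hηnn
    · obtain ⟨hxtK, hmin'⟩ := hx t h ht
      have hlink : ∀ v : EuclideanSpace ℝ (Fin d),
          ψ t v = (∑ s ∈ Icc 1 t, (s : ℝ) * (f (xtil s) - ⟪g s, xtil s⟫))
            + ((∑ s ∈ Icc 1 t, (s : ℝ) * ⟪v, y s⟫) + (1 / η) * R v) := by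
        intro v
        simp only [hψdef]
        have hterm : ∀ s ∈ Icc 1 t,
            (s : ℝ) * (f (xtil s) + ⟪g s, v - xtil s⟫)
              = (s : ℝ) * (f (xtil s) - ⟪g s, xtil s⟫) + (s : ℝ) * ⟪v, y s⟫ := by
          intro s hs
          have hs1 : 1 ≤ s := (Finset.mem_Icc.mp hs).1
          have h1 : ⟪g s, v - xtil s⟫ = ⟪g s, v⟫ - ⟪g s, xtil s⟫ := inner_sub_right _ _ _
          have h2 : ⟪g s, v⟫ = ⟪v, y s⟫ := by
            rw [hy s hs1, hgdef, real_inner_comm]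
          rw [h1, h2]; ring
        rw [Finset.sum_congr rfl hterm, Finset.sum_add_distrib]
        ring
      rw [hlink (x t), hlink w]
      linarith [hmin' w hw]
  -- strong convexity of ψ t
  have hψstrong : ∀ t : ℕ, ∀ u v : EuclideanSpace ℝ (Fin d), ∀ a : ℝ, 0 ≤ a → a ≤ 1 →
      ψ t (a • u + (1 - a) • v)
        ≤ a * ψ t u + (1 - a) * ψ t v - (1 / η) / 2 * a * (1 - a) * (N (u - v)) ^ 2 := by
    intro t u v a ha0 ha1
    have hterm : ∀ s ∈ Icc 1 t,
        (s : ℝ) * (f (xtil s) + ⟪g s, (a • u + (1 - a) • v) - xtil s⟫)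
          = a * ((s : ℝ) * (f (xtil s) + ⟪g s, u - xtil s⟫))
            + (1 - a) * ((s : ℝ) * (f (xtil s) + ⟪g s, v - xtil s⟫)) := by
      intro s _
      have hvec : (a • u + (1 - a) • v) - xtil s
          = a • (u - xtil s) + (1 - a) • (v - xtil s) := by module
      rw [hvec, inner_add_right, real_inner_smul_right, real_inner_smul_right]
      ring
    have hRpart := mul_le_mul_of_nonneg_left (hR u v a ha0 ha1) hηnn
    simp only [hψdef]
    rw [Finset.sum_congr rfl hterm, Finset.sum_add_distrib, ← Finset.mul_sum, ← Finset.mul_sum]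
    nlinarith [hRpart]
  -- minimizer inequality
  have hψK : ∀ t, t ≤ T → ∀ w ∈ K,
      ψ t (x t) + (1 / η) / 2 * (N (w - x t)) ^ 2 ≤ ψ t w := by
    intro t ht w hw
    exact strong_min (ψ t) N (1 / η) K hKconv (hψstrong t) (x t) (hxK t ht) (hψmin t ht) w hw
  -- sum of weights
  have hsumA : ∀ t : ℕ, (∑ s ∈ Icc 1 t, (s : ℝ)) = A t := by
    intro t
    induction t with
    | zero => simp [hA]
    | succ n ih =>
      rw [Finset.sum_Icc_succ_top (by omega : 1 ≤ n + 1), ih, hA, hA]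
      push_cast; ring
  -- main induction
  have Smain : ∀ t : ℕ, t ≤ T → A t * f (xb t) + (1 / η) * R z ≤ ψ t (x t) := by
    intro t
    induction t with
    | zero =>
      intro _
      have hA0 : A 0 = 0 := by rw [hA]; norm_num
      have hempty : (Icc 1 0 : Finset ℕ) = ∅ := by simp
      simp only [hψdef, hx0, hA0, hempty, Finset.sum_empty, zero_mul, zero_add]
      exact le_refl _
    | succ n ih =>
      intro ht
      have hn := ih (by omega)
      have ht1 : (1:ℕ) ≤ n + 1 := by omega
      have hAt : 0 < A (n+1) := hApos _ ht1
      set α : ℝ := ((n:ℝ) + 1) with hα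
      clear_value α
      have hαpos : 0 < α := by rw [hα]; positivity
      have hcast : ((n + 1 : ℕ) : ℝ) = α := by push_cast; rw [hα]
      have F1 : A (n+1) = A n + α := by rw [hA, hA]; push_cast; rw [hα]; ring
      have F2 : A (n+1) • xtil (n+1) = α • x n + Abar n := by
        have h := hxtil (n+1) ht1
        simp only [Nat.add_sub_cancel] at h
        rw [h, smul_inv_smul₀ hAt.ne']
        rw [hcast, hAbardef]
      have F3 : Abar (n+1) = Abar n + α • x (n+1) := by
        simp only [hAbardef]
        rw [Finset.sum_Icc_succ_top (by omega : 1 ≤ n + 1), hcast]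
      have F5 : A n • xb n = Abar n := by
        rcases Nat.eq_zero_or_pos n with rfl | hnpos
        · have : A 0 = 0 := by rw [hA]; norm_num
          simp [hxbdef, hAbardef, this]
        · simp only [hxbdef]
          rw [smul_inv_smul₀ (hApos n hnpos).ne']
      have F4 : xb (n+1) = xtil (n+1) + (α / A (n+1)) • (x (n+1) - x n) := by
        apply smul_right_injective (EuclideanSpace ℝ (Fin d)) hAt.ne'
        show A (n+1) • xb (n+1)
            = A (n+1) • (xtil (n+1) + (α / A (n+1)) • (x (n+1) - x n))
        have hsc : A (n+1) * (α / A (n+1)) = α := by field_simp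
        simp only [hxbdef]
        rw [smul_inv_smul₀ hAt.ne', F3, smul_add, F2, smul_smul, hsc, smul_sub]
        abel
      -- decompose ψ (n+1)
      have ha : ψ (n+1) (x (n+1)) = ψ n (x (n+1))
          + α * (f (xtil (n+1)) + ⟪g (n+1), x (n+1) - xtil (n+1)⟫) := by
        simp only [hψdef]
        rw [Finset.sum_Icc_succ_top (by omega : 1 ≤ n + 1), hcast]
        ring
      have hb := hψK n (by omega) (x (n+1)) (hxK (n+1) ht)
      have hd : A n * (f (xtil (n+1)) + ⟪g (n+1), xb n - xtil (n+1)⟫) ≤ A n * f (xb n) := by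
        rw [hgs]
        exact mul_le_mul_of_nonneg_left
          (convex_grad_ineq f hconv hdiff (xtil (n+1)) (xb n)) (hAnn n)
      -- inner product identity
      have hvec : A n • (xb n - xtil (n+1)) + α • (x (n+1) - xtil (n+1))
          = α • (x (n+1) - x n) := by
        have e1 : A n • (xb n - xtil (n+1)) = Abar n - A n • xtil (n+1) := by
          rw [smul_sub, F5]
        have e2 : A n • xtil (n+1) + α • xtil (n+1) = α • x n + Abar n := by
          rw [← add_smul, ← F1, F2]
        rw [e1, smul_sub α (x (n+1)), smul_sub α (x (n+1))]
        have e3 : A n • xtil (n+1) = α • x n + Abar n - α • xtil (n+1) := by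
          rw [← e2]; abel
        rw [e3]
        abel
      have hip : A n * ⟪g (n+1), xb n - xtil (n+1)⟫ + α * ⟪g (n+1), x (n+1) - xtil (n+1)⟫
          = α * ⟪g (n+1), x (n+1) - x n⟫ := by
        rw [← real_inner_smul_right, ← real_inner_smul_right, ← real_inner_smul_right,
          ← inner_add_right, hvec]
      -- descent lemma
      have hf4 : f (xb (n+1)) ≤ f (xtil (n+1)) + (α / A (n+1)) * ⟪g (n+1), x (n+1) - x n⟫
          + L / 2 * ((α / A (n+1)) * N (x (n+1) - x n)) ^ 2 := by
        have hds := descent_lemma f N L hdiff hgc hpair hN_smul (xtil (n+1))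
          ((α / A (n+1)) • (x (n+1) - x n))
        rw [← hgs (n+1)] at hds
        have hNs : N ((α / A (n+1)) • (x (n+1) - x n))
            = (α / A (n+1)) * N (x (n+1) - x n) := by
          rw [hN_smul, abs_of_nonneg (div_nonneg hαpos.le hAt.le)]
        rw [← F4, real_inner_smul_right, hNs] at hds
        exact hds
      -- coefficient bound
      have hcoef : L / 2 * (α / A (n+1)) ^ 2 * A (n+1) ≤ (1 / η) / 2 := by
        have hAval : A (n+1) = α * (α + 1) / 2 := by simp only [hα, hA]; push_cast; ring
        rw [hη4, hAval]
        have h1 : (0:ℝ) < α + 1 := by linarith [hαpos]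
        have heq : L / 2 * (α / (α * (α + 1) / 2)) ^ 2 * (α * (α + 1) / 2)
            = L * α / (α + 1) := by
          field_simp
        rw [heq, div_le_iff₀ h1]
        nlinarith [hαpos, hL]
      have hNsq : 0 ≤ (N (x (n+1) - x n)) ^ 2 := sq_nonneg _
      -- combine everything
      have key : ψ (n+1) (x (n+1)) ≥ (1 / η) * R z + (1 / η) / 2 * (N (x (n+1) - x n)) ^ 2
          + A (n+1) * f (xtil (n+1)) + α * ⟪g (n+1), x (n+1) - x n⟫ := by
        have hd' := hd
        rw [mul_add] at hd'
        rw [ha, F1]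
        linarith only [hb, hn, hd', hip]
      have hmulf : A (n+1) * f (xb (n+1)) ≤ A (n+1) * f (xtil (n+1))
          + α * ⟪g (n+1), x (n+1) - x n⟫
          + L / 2 * (α / A (n+1)) ^ 2 * A (n+1) * (N (x (n+1) - x n)) ^ 2 := by
        have hle := mul_le_mul_of_nonneg_left hf4 hAt.le
        have hexp : A (n+1) * (f (xtil (n+1)) + (α / A (n+1)) * ⟪g (n+1), x (n+1) - x n⟫
            + L / 2 * ((α / A (n+1)) * N (x (n+1) - x n)) ^ 2)
            = A (n+1) * f (xtil (n+1)) + α * ⟪g (n+1), x (n+1) - x n⟫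
              + L / 2 * (α / A (n+1)) ^ 2 * A (n+1) * (N (x (n+1) - x n)) ^ 2 := by
          field_simp
        rw [hexp] at hle
        exact hle
      linarith [key, hmulf, mul_le_mul_of_nonneg_right hcoef hNsq]
  -- conclusion
  have hfinal1 := Smain T (le_refl T)
  have hfinal2 := hψmin T (le_refl T) xstar hxstar
  have hfinal3 : ψ T xstar ≤ A T * f xstar + (1 / η) * R xstar := by
    simp only [hψdef]
    have hterm : ∀ s ∈ Icc 1 T,
        (s : ℝ) * (f (xtil s) + ⟪g s, xstar - xtil s⟫) ≤ (s : ℝ) * f xstar := by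
      intro s hs
      have hs1 : 1 ≤ s := (Finset.mem_Icc.mp hs).1
      apply mul_le_mul_of_nonneg_left _ (by positivity : (0:ℝ) ≤ (s:ℝ))
      rw [hgs]
      exact convex_grad_ineq f hconv hdiff (xtil s) xstar
    have := Finset.sum_le_sum hterm
    rw [← Finset.sum_mul, hsumA] at this
    linarith
  have hxbT : xbar = xb T := by rw [hxbar, hxbdef, hAbardef]
  have hATpos : 0 < A T := hApos T hT
  have hmain : A T * (f xbar - f xstar) ≤ 4 * L * (R xstar - R z) := by
    rw [hxbT]
    have h1 : A T * f (xb T) + (1 / η) * R z ≤ A T * f xstar + (1 / η) * R xstar := by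
      exact le_trans hfinal1 (le_trans hfinal2 hfinal3)
    rw [hη4] at h1
    linarith
  have hTT : (0:ℝ) < (T : ℝ) * ((T:ℝ) + 1) := by
    have : (1:ℝ) ≤ (T:ℝ) := by exact_mod_cast hT
    nlinarith
  have hAT2 : A T = (T:ℝ) * ((T:ℝ) + 1) / 2 := by rw [hA]
  rw [hAT2] at hmain
  rw [le_div_iff₀ hTT]
  linarith [hmain]
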